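/- Let H be a directed graph with non-negative edge weights in which every vertex is reachable from a root r and every edge lying on a directed cycle has weight zero. Construct a branching as follows: contract each strongly connected component of the subgraph induced by weight-zero edges; for each component not containing r, select a minimum-weight incoming edge; within each component, select a zero-weight branching from the base vertex (the head of the selected incoming edge, or r). Then the selected edges form a branching from r of minimum total weight among all branchings from r in H. -/

import Mathlib

open Finset

/-- A walk in a directed graph (relation) `E`, given as the list of its vertices. -/
def IsDiWalk {V : Type*} (E : V → V → Prop) (u v : V) (l : List V) : Prop :=
  l.head? = some u ∧ l.getLast? = some v ∧ l.Chain' E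

/-- Weight of a directed walk: sum of weights of its consecutive pairs. -/
noncomputable def dwalkWeight {V : Type*} (w : V → V → ℝ) (l : List V) : ℝ :=
  ((l.zip l.tail).map fun p => w p.1 p.2).sum

/-- Directed shortest-path distance from `u` to `v`. -/
noncomputable def ddist {V : Type*} (E : V → V → Prop) (w : V → V → ℝ) (u v : V) : ℝ :=
  sInf {x | ∃ l, IsDiWalk E u v l ∧ dwalkWeight w l = x}

/-- `T` is a branching (spanning arborescence) from `r` in the directed graph `E`:
its edges are edges of `E`, the root has no incoming edge, every other vertex has
exactly one incoming edge, and every vertex is reachable from `r` along `T`. -/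
def IsBranching {V : Type*} (E T : V → V → Prop) (r : V) : Prop :=
  (∀ u v, T u v → E u v) ∧ (∀ u, ¬ T u r) ∧ (∀ v, v ≠ r → ∃! u, T u v) ∧
    ∀ v, Relation.ReflTransGen T r v

open scoped Classical in
/-- Total weight of the edges of a directed subgraph `F`. -/
noncomputable def bweight {V : Type*} [Fintype V] (F : V → V → Prop) (w : V → V → ℝ) : ℝ :=
  ∑ p ∈ Finset.univ.filter (fun p : V × V => F p.1 p.2), w p.1 p.2
/-- Correctness of the greedy branching construction: in a directed
graph in which every vertex is reachable from `r` and every edge on a directed cycle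
has weight zero, suppose `F` is obtained by contracting the strongly connected
components of the zero-weight subgraph (`sc` is the same-component relation), choosing
for each component not containing `r` a minimum-weight incoming edge (into the
component's base vertex), and choosing inside each component a zero-weight branching
from its base. Then `F` is a branching from `r` of minimum total weight. -/
theorem greedy_branching_optimal {V : Type*} [Fintype V]
    (E : V → V → Prop) (w : V → V → ℝ) (hw : ∀ u v, 0 ≤ w u v) (r : V)
    (hreach : ∀ v, Relation.ReflTransGen E r v)
    (hcyc : ∀ u v, E u v → Relation.ReflTransGen E v u → w u v = 0)
    (Z : V → V → Prop) (hZ : ∀ u v, Z u v ↔ E u v ∧ w u v = 0)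
    (sc : V → V → Prop)
    (hsc : ∀ u v, sc u v ↔ Relation.ReflTransGen Z u v ∧ Relation.ReflTransGen Z v u)
    (F : V → V → Prop) (base : V → V)
    (hFE : ∀ u v, F u v → E u v)
    -- `base` picks one base vertex in each strongly connected component:
    (hbase_comp : ∀ v, sc (base v) v)
    (hbase_eq : ∀ u v, sc u v → base u = base v)
    (hbase_r : base r = r)
    -- for each component not containing `r`, the chosen incoming edge enters the base
    -- and has minimum weight among all edges entering the component:
    (hchoice : ∀ v, ¬ sc v r → ∃ u, F u (base v) ∧ ¬ sc u v ∧
        ∀ x y, E x y → sc y v → ¬ sc x y → w u (base v) ≤ w x y)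
    (hbase_in : ∀ v, ¬ sc v r → ∃! u, F u (base v))
    (hinter : ∀ u v, F u v → ¬ sc u v → v = base v)
    -- intra-component edges of `F` have weight zero and form branchings from the bases:
    (hintra : ∀ u v, F u v → sc u v → w u v = 0)
    (hin : ∀ v, v ≠ base v → (∃! u, F u v) ∧ ∀ u, F u v → sc u v)
    (hroot : ∀ u, ¬ F u r)
    (hreachF : ∀ v, Relation.ReflTransGen (fun a b => F a b ∧ sc a b) (base v) v) :
    IsBranching E F r ∧
      ∀ F' : V → V → Prop, IsBranching E F' r → bweight F w ≤ bweight F' w := by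
  classical
  -- sc is an equivalence relation
  have screfl : ∀ a, sc a a := fun a => (hsc a a).2 ⟨.refl, .refl⟩
  have scsymm : ∀ a b, sc a b → sc b a := fun a b h => by
    rw [hsc] at h ⊢; exact ⟨h.2, h.1⟩
  have sctrans : ∀ a b c, sc a b → sc b c → sc a c := fun a b c h1 h2 => by
    rw [hsc] at h1 h2 ⊢; exact ⟨h1.1.trans h2.1, h2.2.trans h1.2⟩
  have hZE : ∀ a b, Relation.ReflTransGen Z a b → Relation.ReflTransGen E a b :=
    fun a b h => Relation.ReflTransGen.mono (fun x y hxy => ((hZ x y).1 hxy).1) _ _ h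
  -- key: mutual E-reachability implies Z-reachability
  have zkey : ∀ a b, Relation.ReflTransGen E a b → Relation.ReflTransGen E b a →
      Relation.ReflTransGen Z a b := by
    intro a b hab
    induction hab with
    | refl => intro _; exact .refl
    | @tail c d hac hcd ih =>
      intro hda
      have h1 : Relation.ReflTransGen E c a := Relation.ReflTransGen.head hcd hda
      have h2 : w c d = 0 := hcyc c d hcd (hda.trans hac)
      exact (ih h1).tail ((hZ c d).2 ⟨hcd, h2⟩)
  have scE : ∀ a b, Relation.ReflTransGen E a b → Relation.ReflTransGen E b a → sc a b :=
    fun a b h1 h2 => (hsc a b).2 ⟨zkey a b h1 h2, zkey b a h2 h1⟩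
  have hscr : ∀ v, sc v r ↔ base v = r := by
    intro v
    constructor
    · intro h; rw [hbase_eq v r h, hbase_r]
    · intro h; exact scsymm _ _ (h ▸ hbase_comp v)
  have hFsub : ∀ a b : V, Relation.ReflTransGen (fun a b => F a b ∧ sc a b) a b →
      Relation.ReflTransGen F a b := fun a b h => Relation.ReflTransGen.mono (fun x y hxy => hxy.1) _ _ h
  have hFEsub : ∀ a b : V, Relation.ReflTransGen F a b → Relation.ReflTransGen E a b :=
    fun a b h => Relation.ReflTransGen.mono hFE _ _ h
  -- reachability of each base from r in F, by strong induction on # of E-ancestors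
  set m : V → ℕ := fun v =>
    (Finset.univ.filter (fun x => Relation.ReflTransGen E x (base v))).card with hm
  have reach_base : ∀ n (v : V), m v ≤ n → Relation.ReflTransGen F r (base v) := by
    intro n
    induction n with
    | zero =>
      intro v hv
      exfalso
      have : base v ∈ Finset.univ.filter
          (fun x => Relation.ReflTransGen E x (base v)) := by
        simp [Relation.ReflTransGen.refl]
      have h2 : 0 < m v := Finset.card_pos.2 ⟨_, this⟩
      omega
    | succ n ih =>
      intro v hv
      by_cases h : sc v r
      · rw [(hscr v).1 h]
      · obtain ⟨u, hFu, hnsc, _⟩ := hchoice v h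
        -- base u reaches base v in E
        have hBV : Relation.ReflTransGen E (base u) (base v) :=
          (hFEsub _ _ (hFsub _ _ (hreachF u))).tail (hFE _ _ hFu)
        have hsub : (Finset.univ.filter (fun x => Relation.ReflTransGen E x (base u))) ⊂
            (Finset.univ.filter (fun x => Relation.ReflTransGen E x (base v))) := by
          constructor
          · intro x hx
            simp only [Finset.mem_filter, Finset.mem_univ, true_and] at hx ⊢
            exact hx.trans hBV
          · intro hcon
            have hbv : base v ∈ Finset.univ.filter
                (fun x => Relation.ReflTransGen E x (base v)) := by
              simp [Relation.ReflTransGen.refl]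
            have := hcon hbv
            simp only [Finset.mem_filter, Finset.mem_univ, true_and] at this
            -- mutual reachability of base u, base v ⇒ sc u v, contradiction
            have hscuv : sc (base v) (base u) := scE _ _ this hBV
            exact hnsc (sctrans _ _ _ (sctrans _ _ _ (scsymm _ _ (hbase_comp u))
              (scsymm _ _ hscuv)) (hbase_comp v))
        have hlt : m u < m v := Finset.card_lt_card hsub
        have h1 : Relation.ReflTransGen F r (base u) := ih u (by omega)
        exact (h1.trans (hFsub _ _ (hreachF u))).tail hFu
  have reachF : ∀ v, Relation.ReflTransGen F r v :=
    fun v => (reach_base (m v) v le_rfl).trans (hFsub _ _ (hreachF v))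
  have hbranch : IsBranching E F r := by
    refine ⟨hFE, hroot, ?_, reachF⟩
    intro v hv
    by_cases hb : v = base v
    · have hnsc : ¬ sc v r := by
        intro h; exact hv (by rw [hb, (hscr v).1 h])
      have := hbase_in v hnsc
      rwa [← hb] at this
    · exact (hin v hb).1
  refine ⟨hbranch, ?_⟩
  -- Optimality
  intro F' hF'
  set B : Finset V := Finset.univ.filter (fun b => base b = b ∧ b ≠ r) with hB
  have hBmem : ∀ b ∈ B, base b = b ∧ b ≠ r := by
    intro b hb; simpa [hB] using hb
  have hBnsc : ∀ b ∈ B, ¬ sc b r := by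
    intro b hb h
    exact (hBmem b hb).2 (by rw [← (hBmem b hb).1, (hscr b).1 h])
  -- the chosen minimum incoming edge for each base
  have huF : ∀ b ∈ B, ∃ u, F u b ∧ ¬ sc u b ∧
      ∀ x y, E x y → sc y b → ¬ sc x y → w u b ≤ w x y := by
    intro b hb
    obtain ⟨u, h1, h2, h3⟩ := hchoice b (hBnsc b hb)
    rw [(hBmem b hb).1] at h1 h3
    exact ⟨u, h1, h2, h3⟩
  set uF : V → V := fun b => if hb : b ∈ B then (huF b hb).choose else b with huFdef
  have huFspec : ∀ b ∈ B, F (uF b) b ∧ ¬ sc (uF b) b ∧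
      ∀ x y, E x y → sc y b → ¬ sc x y → w (uF b) b ≤ w x y := by
    intro b hb
    simp only [huFdef, dif_pos hb]
    exact (huF b hb).choose_spec
  -- weight of F equals sum over B of the chosen edges' weights
  have hFweight : bweight F w = ∑ b ∈ B, w (uF b) b := by
    rw [bweight]
    rw [← Finset.sum_filter_add_sum_filter_not _ (fun p : V × V => sc p.1 p.2)]
    have hzero : ∑ p ∈ (Finset.univ.filter (fun p : V × V => F p.1 p.2)).filter
        (fun p => sc p.1 p.2), w p.1 p.2 = 0 := by
      apply Finset.sum_eq_zero
      intro p hp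
      simp only [Finset.mem_filter, Finset.mem_univ, true_and] at hp
      exact hintra _ _ hp.1 hp.2
    rw [hzero, zero_add]
    have hset : (Finset.univ.filter (fun p : V × V => F p.1 p.2)).filter
        (fun p => ¬ sc p.1 p.2) = B.image (fun b => (uF b, b)) := by
      ext p
      simp only [Finset.mem_filter, Finset.mem_univ, true_and, Finset.mem_image]
      constructor
      · rintro ⟨hFp, hnsc⟩
        have hb1 : p.2 = base p.2 := hinter _ _ hFp hnsc
        have hb2 : p.2 ≠ r := fun h => hroot p.1 (h ▸ hFp)
        have hbB : p.2 ∈ B := by simp [hB, hb1.symm, hb2]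
        refine ⟨p.2, hbB, ?_⟩
        have huniq := hbase_in p.2 (hBnsc _ hbB)
        rw [← hb1] at huniq
        obtain ⟨u0, _, hu0⟩ := huniq
        have e1 : p.1 = u0 := hu0 _ hFp
        have e2 : uF p.2 = u0 := hu0 _ (huFspec _ hbB).1
        exact Prod.ext_iff.2 ⟨e2.trans e1.symm, rfl⟩
      · rintro ⟨b, hbB, rfl⟩
        exact ⟨(huFspec b hbB).1, (huFspec b hbB).2.1⟩
    rw [hset, Finset.sum_image]
    intro x _ y _ h
    exact (Prod.ext_iff.1 h).2
  -- crossing edges: any walk in a relation G from a to b with ¬ sc a b crosses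
  have cross_gen : ∀ (G : V → V → Prop) (a b : V), Relation.ReflTransGen G a b →
      ¬ sc a b → ∃ x y, G x y ∧ ¬ sc x y ∧ sc y b := by
    intro G a b hab
    induction hab using Relation.ReflTransGen.head_induction_on with
    | refl => intro h; exact absurd (screfl b) h
    | @head a' c hG hcb ih =>
      intro hnab
      by_cases h : sc c b
      · exact ⟨a', c, hG, fun hc => hnab (sctrans _ _ _ hc h), h⟩
      · exact ih h
  have cross : ∀ b ∈ B, ∃ p : V × V, F' p.1 p.2 ∧ ¬ sc p.1 p.2 ∧ sc p.2 b := by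
    intro b hb
    have hnrb : ¬ sc r b := fun h => hBnsc b hb (scsymm _ _ h)
    obtain ⟨x, y, h1, h2, h3⟩ := cross_gen F' r b (hF'.2.2.2 b) hnrb
    exact ⟨(x, y), h1, h2, h3⟩
  set e : V → V × V := fun b => if hb : b ∈ B then (cross b hb).choose else (b, b)
    with hedef
  have hespec : ∀ b ∈ B, F' (e b).1 (e b).2 ∧ ¬ sc (e b).1 (e b).2 ∧ sc (e b).2 b := by
    intro b hb
    simp only [hedef, dif_pos hb]
    exact (cross b hb).choose_spec
  have heinj : ∀ x ∈ B, ∀ y ∈ B, e x = e y → x = y := by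
    intro x hx y hy hxy
    have h1 := (hespec x hx).2.2
    have h2 := (hespec y hy).2.2
    rw [hxy] at h1
    have : sc x y := sctrans _ _ _ (scsymm _ _ h1) h2
    rw [← (hBmem x hx).1, ← (hBmem y hy).1]
    exact hbase_eq _ _ this
  -- final chain of inequalities
  have step1 : ∑ b ∈ B, w (uF b) b ≤ ∑ b ∈ B, w (e b).1 (e b).2 := by
    apply Finset.sum_le_sum
    intro b hb
    obtain ⟨hf, hns, hsc2⟩ := hespec b hb
    exact (huFspec b hb).2.2 _ _ (hF'.1 _ _ hf) hsc2 hns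
  have step2 : ∑ b ∈ B, w (e b).1 (e b).2 = ∑ p ∈ B.image e, w p.1 p.2 :=
    (Finset.sum_image (f := fun p : V × V => w p.1 p.2) heinj).symm
  have step3 : B.image e ⊆ Finset.univ.filter (fun p : V × V => F' p.1 p.2) := by
    intro p hp
    obtain ⟨b, hb, rfl⟩ := Finset.mem_image.1 hp
    simp only [Finset.mem_filter, Finset.mem_univ, true_and]
    exact (hespec b hb).1
  have step4 : ∑ p ∈ B.image e, w p.1 p.2 ≤ bweight F' w := by
    rw [bweight]
    exact Finset.sum_le_sum_of_subset_of_nonneg step3 (fun p _ _ => hw p.1 p.2)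
  rw [hFweight]
  linarith
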